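/- Let Homeo₊(S¹) denote the group (under composition) of homeomorphisms of the circle ℝ/ℤ that admit a continuous monotone increasing lift ℝ → ℝ, and for a ∈ ℝ/ℤ let r_a denote the rotation x ↦ x + a. Then there is no group homomorphism τ : Homeo₊(S¹) → ℝ/ℤ satisfying τ(r_a) = a for all a ∈ ℝ/ℤ; that is, there is no retraction of Homeo₊(S¹) onto its rotation subgroup which is a group homomorphism. -/

import Mathlib

open Real

noncomputable section

namespace NoRetraction

/-- Cross-term (numerator of the angle increment). -/
def mN (a b c d x : ℝ) : ℝ :=
  (c * cos (π * x) + d * sin (π * x)) * cos (π * x)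
    - (a * cos (π * x) + b * sin (π * x)) * sin (π * x)

/-- Dot-term (denominator of the angle increment). -/
def mD (a b c d x : ℝ) : ℝ :=
  (a * cos (π * x) + b * sin (π * x)) * cos (π * x)
    + (c * cos (π * x) + d * sin (π * x)) * sin (π * x)

/-- Lift of the projective action of the matrix `[[a,b],[c,d]]` (valid when the
symmetric part is positive definite). -/
def mob (a b c d x : ℝ) : ℝ := x + (1 / π) * arctan (mN a b c d x / mD a b c d x)

/-- `F` is a lift of the circle map induced by `[[a,b],[c,d]]`. -/
def Dir (a b c d : ℝ) (F : ℝ → ℝ) : Prop :=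
  ∀ x : ℝ,
    (a * cos (π * x) + b * sin (π * x)) * sin (π * F x)
      - (c * cos (π * x) + d * sin (π * x)) * cos (π * F x) = 0
    ∧ 0 < (a * cos (π * x) + b * sin (π * x)) * cos (π * F x)
        + (c * cos (π * x) + d * sin (π * x)) * sin (π * F x)

lemma quad_pos {a b c d : ℝ} (ha : 0 < a) (hd : 0 < d) (hb : (b + c) ^ 2 < 4 * (a * d))
    (C S : ℝ) (hCS : C ^ 2 + S ^ 2 = 1) :
    0 < (a * C + b * S) * C + (c * C + d * S) * S := by
  rcases eq_or_ne S 0 with hS | hS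
  · have hC : C ^ 2 = 1 := by simpa [hS] using hCS
    have h2 : (a * C + b * S) * C + (c * C + d * S) * S = a * C ^ 2 := by rw [hS]; ring
    rw [h2, hC]; simpa using ha
  · have hS2 : 0 < S ^ 2 := (sq_nonneg S).lt_of_ne (fun h => hS (by
      have := h.symm; exact pow_eq_zero_iff (n := 2) (by norm_num) |>.mp this))
    nlinarith [sq_nonneg (2 * a * C + (b + c) * S), mul_pos (sub_pos.mpr hb) hS2]

lemma mD_pos {a b c d : ℝ} (ha : 0 < a) (hd : 0 < d) (hb : (b + c) ^ 2 < 4 * (a * d))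
    (x : ℝ) : 0 < mD a b c d x :=
  quad_pos ha hd hb _ _ (cos_sq_add_sin_sq (π * x))

lemma mN_cont (a b c d : ℝ) : Continuous (mN a b c d) := by unfold mN; fun_prop

lemma mD_cont (a b c d : ℝ) : Continuous (mD a b c d) := by unfold mD; fun_prop

lemma mob_cont {a b c d : ℝ} (ha : 0 < a) (hd : 0 < d) (hb : (b + c) ^ 2 < 4 * (a * d)) :
    Continuous (mob a b c d) := by
  unfold mob
  have h1 : Continuous fun x => mN a b c d x / mD a b c d x :=
    (mN_cont a b c d).div (mD_cont a b c d) (fun x => (mD_pos ha hd hb x).ne')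
  exact continuous_id.add (continuous_const.mul (Real.continuous_arctan.comp h1))

lemma mN_per (a b c d x : ℝ) : mN a b c d (x + 1) = mN a b c d x := by
  unfold mN
  have h : π * (x + 1) = π * x + π := by ring
  rw [h, cos_add_pi, sin_add_pi]; ring

lemma mD_per (a b c d x : ℝ) : mD a b c d (x + 1) = mD a b c d x := by
  unfold mD
  have h : π * (x + 1) = π * x + π := by ring
  rw [h, cos_add_pi, sin_add_pi]; ring

lemma mob_per (a b c d x : ℝ) : mob a b c d (x + 1) = mob a b c d x + 1 := by
  unfold mob; rw [mN_per, mD_per]; ring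

lemma mob_dir {a b c d : ℝ} (ha : 0 < a) (hd : 0 < d) (hb : (b + c) ^ 2 < 4 * (a * d)) :
    Dir a b c d (mob a b c d) := by
  intro x
  have hD : 0 < mD a b c d x := mD_pos ha hd hb x
  have hπ : π * mob a b c d x = π * x + arctan (mN a b c d x / mD a b c d x) := by
    unfold mob; field_simp
  rw [hπ, cos_add, sin_add, cos_arctan, sin_arctan]
  set C := cos (π * x) with hC
  set S := sin (π * x) with hS
  set N := mN a b c d x with hN
  set D := mD a b c d x with hDdef
  set r := N / D with hr
  have hrD : r * D = N := div_mul_cancel₀ N hD.ne'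
  have hQ : 0 < Real.sqrt (1 + r ^ 2) := Real.sqrt_pos.2 (by positivity)
  have hNe : N = (c * C + d * S) * C - (a * C + b * S) * S := rfl
  have hDe : D = (a * C + b * S) * C + (c * C + d * S) * S := rfl
  constructor
  · have expand : (a * C + b * S) * (S * (1 / Real.sqrt (1 + r ^ 2)) + C * (r / Real.sqrt (1 + r ^ 2)))
        - (c * C + d * S) * (C * (1 / Real.sqrt (1 + r ^ 2)) - S * (r / Real.sqrt (1 + r ^ 2)))
        = (1 / Real.sqrt (1 + r ^ 2)) * (-(((c * C + d * S) * C - (a * C + b * S) * S)) + r * ((a * C + b * S) * C + (c * C + d * S) * S)) := by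
      ring
    rw [expand, ← hNe, ← hDe, hrD]
    ring
  · have expand : (a * C + b * S) * (C * (1 / Real.sqrt (1 + r ^ 2)) - S * (r / Real.sqrt (1 + r ^ 2)))
        + (c * C + d * S) * (S * (1 / Real.sqrt (1 + r ^ 2)) + C * (r / Real.sqrt (1 + r ^ 2)))
        = (1 / Real.sqrt (1 + r ^ 2)) * (((a * C + b * S) * C + (c * C + d * S) * S) + r * (((c * C + d * S) * C - (a * C + b * S) * S))) := by
      ring
    rw [expand, ← hNe, ← hDe]
    have hrN : 0 ≤ r * N := by
      rw [hr]; rw [div_mul_eq_mul_div]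
      exact div_nonneg (by nlinarith [sq_nonneg N]) hD.le
    have : 0 < D + r * N := by linarith
    positivity

/-- Resolve the direction condition into exact component equations. -/
lemma dir_resolve {a b c d : ℝ} {F : ℝ → ℝ} (h : Dir a b c d F) (x : ℝ) :
    a * cos (π * x) + b * sin (π * x)
      = ((a * cos (π * x) + b * sin (π * x)) * cos (π * F x)
          + (c * cos (π * x) + d * sin (π * x)) * sin (π * F x)) * cos (π * F x)
    ∧ c * cos (π * x) + d * sin (π * x)
      = ((a * cos (π * x) + b * sin (π * x)) * cos (π * F x)
          + (c * cos (π * x) + d * sin (π * x)) * sin (π * F x)) * sin (π * F x) := by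
  have h1 := (h x).1
  have h2 := sin_sq_add_cos_sq (π * F x)
  constructor
  · linear_combination Real.sin (π * F x) * h1
      - (a * cos (π * x) + b * sin (π * x)) * h2
  · linear_combination (-(Real.cos (π * F x))) * h1
      - (c * cos (π * x) + d * sin (π * x)) * h2

lemma dir_comp {a1 b1 c1 d1 a2 b2 c2 d2 : ℝ} {F G : ℝ → ℝ}
    (h1 : Dir a1 b1 c1 d1 F) (h2 : Dir a2 b2 c2 d2 G) :
    Dir (a1 * a2 + b1 * c2) (a1 * b2 + b1 * d2) (c1 * a2 + d1 * c2) (c1 * b2 + d1 * d2)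
      (fun x => F (G x)) := by
  intro x
  obtain ⟨hr1, hr2⟩ := dir_resolve h2 x
  set δ := (a2 * cos (π * x) + b2 * sin (π * x)) * cos (π * G x)
      + (c2 * cos (π * x) + d2 * sin (π * x)) * sin (π * G x) with hδ
  have hδpos : 0 < δ := (h2 x).2
  obtain ⟨hcross, hdot⟩ := h1 (G x)
  constructor
  · have e1 : ((a1 * a2 + b1 * c2) * cos (π * x) + (a1 * b2 + b1 * d2) * sin (π * x))
        * sin (π * F (G x))
        - ((c1 * a2 + d1 * c2) * cos (π * x) + (c1 * b2 + d1 * d2) * sin (π * x))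
        * cos (π * F (G x))
        = δ * ((a1 * cos (π * G x) + b1 * sin (π * G x)) * sin (π * F (G x))
            - (c1 * cos (π * G x) + d1 * sin (π * G x)) * cos (π * F (G x))) := by
      linear_combination (a1 * sin (π * F (G x)) - c1 * cos (π * F (G x))) * hr1
        + (b1 * sin (π * F (G x)) - d1 * cos (π * F (G x))) * hr2
    rw [e1, hcross, mul_zero]
  · have e2 : ((a1 * a2 + b1 * c2) * cos (π * x) + (a1 * b2 + b1 * d2) * sin (π * x))
        * cos (π * F (G x))
        + ((c1 * a2 + d1 * c2) * cos (π * x) + (c1 * b2 + d1 * d2) * sin (π * x))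
        * sin (π * F (G x))
        = δ * ((a1 * cos (π * G x) + b1 * sin (π * G x)) * cos (π * F (G x))
            + (c1 * cos (π * G x) + d1 * sin (π * G x)) * sin (π * F (G x))) := by
      linear_combination (a1 * cos (π * F (G x)) + c1 * sin (π * F (G x))) * hr1
        + (b1 * cos (π * F (G x)) + d1 * sin (π * F (G x))) * hr2
    rw [e2]
    exact mul_pos hδpos hdot

/-- If `sin (π w) = 0` and `cos (π w) > 0` then `w` is an even integer. -/
lemma eq_two_int {w : ℝ} (h1 : sin (π * w) = 0) (h2 : 0 < cos (π * w)) :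
    ∃ k : ℤ, w = 2 * k := by
  rw [mul_comm] at h1
  obtain ⟨n, hn⟩ := Real.sin_eq_zero_iff.mp h1
  have hw : w = n := (mul_right_cancel₀ Real.pi_ne_zero hn).symm
  rcases Int.even_or_odd n with ⟨k, hk⟩ | ⟨k, hk⟩
  · exact ⟨k, by rw [hw, hk]; push_cast; ring⟩
  · exfalso
    rw [hw] at h2
    have e : π * (n : ℝ) = (k : ℝ) * (2 * π) + π := by
      rw [hk]; push_cast; ring
    rw [e, Real.cos_int_mul_two_pi_add_pi] at h2
    linarith

/-- A continuous function with values in `2ℤ` is constant. -/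
lemma const_of_two_int {h : ℝ → ℝ} (hc : Continuous h) (hk : ∀ x, ∃ k : ℤ, h x = 2 * k)
    (x : ℝ) : h x = h 0 := by
  by_contra hne
  obtain ⟨k, hkx⟩ := hk x
  obtain ⟨k0, hk0⟩ := hk 0
  have hkk : k ≠ k0 := by
    rintro rfl
    exact hne (by rw [hkx, hk0])
  have hmem : (2 * (min k k0 : ℤ) + 1 : ℝ) ∈ Set.uIcc (h x) (h 0) := by
    rw [hkx, hk0, Set.mem_uIcc]
    rcases lt_or_gt_of_ne hkk with hlt | hgt
    · left
      constructor
      · have : (min k k0) = k := by omega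
        rw [this]; push_cast; linarith
      · have h1 : 2 * (min k k0) + 1 ≤ 2 * k0 := by omega
        exact_mod_cast h1
    · right
      constructor
      · have : (min k k0) = k0 := by omega
        rw [this]; push_cast; linarith
      · have h1 : 2 * (min k k0) + 1 ≤ 2 * k := by omega
        exact_mod_cast h1
  obtain ⟨t, _, ht⟩ := intermediate_value_uIcc hc.continuousOn hmem
  obtain ⟨k', hk'⟩ := hk t
  rw [hk'] at ht
  have : (2 * k' : ℤ) = 2 * (min k k0) + 1 := by exact_mod_cast ht
  omega

/-- A lift positively parallel to a positive multiple of the identity matrix is an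
even integer translation. -/
lemma shift_of_scalar {H : ℝ → ℝ} {m : ℝ} (hm : 0 < m) (hd : Dir m 0 0 m H)
    (hc : Continuous H) : ∃ k : ℤ, ∀ x, H x = x + 2 * k := by
  have key : ∀ x, ∃ k : ℤ, H x - x = 2 * k := by
    intro x
    obtain ⟨h1, h2⟩ := hd x
    have e1 : sin (π * (H x - x)) = sin (π * H x) * cos (π * x) - cos (π * H x) * sin (π * x) := by
      rw [show π * (H x - x) = π * H x - π * x by ring, sin_sub]
    have e2 : cos (π * (H x - x)) = cos (π * H x) * cos (π * x) + sin (π * H x) * sin (π * x) := by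
      rw [show π * (H x - x) = π * H x - π * x by ring, cos_sub]
    apply eq_two_int
    · rw [e1]
      have hz : m * (sin (π * H x) * cos (π * x) - cos (π * H x) * sin (π * x)) = 0 := by
        linear_combination h1
      rcases mul_eq_zero.mp hz with h | h
      · exact absurd h hm.ne'
      · exact h
    · rw [e2]
      nlinarith [h2]
  obtain ⟨k0, hk0⟩ := key 0
  refine ⟨k0, fun x => ?_⟩
  have hcc : Continuous fun x => H x - x := hc.sub continuous_id
  have h3 := const_of_two_int hcc key x
  simp only [sub_zero] at h3 hk0
  rw [hk0] at h3
  linarith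

/-- The key rigidity: if `u` is a lift for `J * Q` and `v` a lift for `Q`, then
`u = v + 1/2 + 2k`. -/
lemma shift_of_J {u v : ℝ → ℝ} {q1 q2 q3 q4 : ℝ}
    (hu : Dir (-q3) (-q4) q1 q2 u) (hv : Dir q1 q2 q3 q4 v)
    (hcu : Continuous u) (hcv : Continuous v) :
    ∃ k : ℤ, ∀ x, u x = v x + (1 / 2 + 2 * k) := by
  have key : ∀ x, ∃ k : ℤ, u x - v x - 1 / 2 = 2 * k := by
    intro x
    have h1v := (hv x).1
    have h2v := (hv x).2
    have hpyth := sin_sq_add_cos_sq (π * v x)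
    have hr1 : q1 * cos (π * x) + q2 * sin (π * x)
        = ((q1 * cos (π * x) + q2 * sin (π * x)) * cos (π * v x)
            + (q3 * cos (π * x) + q4 * sin (π * x)) * sin (π * v x)) * cos (π * v x) := by
      linear_combination Real.sin (π * v x) * h1v
        - (q1 * cos (π * x) + q2 * sin (π * x)) * hpyth
    have hr2 : q3 * cos (π * x) + q4 * sin (π * x)
        = ((q1 * cos (π * x) + q2 * sin (π * x)) * cos (π * v x)
            + (q3 * cos (π * x) + q4 * sin (π * x)) * sin (π * v x)) * sin (π * v x) := by
      linear_combination (-(Real.cos (π * v x))) * h1v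
        - (q3 * cos (π * x) + q4 * sin (π * x)) * hpyth
    set δ := (q1 * cos (π * x) + q2 * sin (π * x)) * cos (π * v x)
        + (q3 * cos (π * x) + q4 * sin (π * x)) * sin (π * v x) with hδ
    have h1u := (hu x).1
    have h2u := (hu x).2
    have hcos : δ * cos (π * (u x - v x)) = 0 := by
      rw [show π * (u x - v x) = π * u x - π * v x by ring, cos_sub]
      linear_combination (-(cos (π * u x))) * hr1 - sin (π * u x) * hr2 - h1u
    have hsin : δ * sin (π * (u x - v x))
        = (-q3 * cos (π * x) + -q4 * sin (π * x)) * cos (π * u x)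
          + (q1 * cos (π * x) + q2 * sin (π * x)) * sin (π * u x) := by
      rw [show π * (u x - v x) = π * u x - π * v x by ring, sin_sub]
      linear_combination (-(sin (π * u x))) * hr1 + cos (π * u x) * hr2
    have hcos0 : cos (π * (u x - v x)) = 0 := by
      rcases mul_eq_zero.mp hcos with h | h
      · exact absurd h h2v.ne'
      · exact h
    have hsinpos : 0 < sin (π * (u x - v x)) := by
      have h4 : 0 < δ * sin (π * (u x - v x)) := by rw [hsin]; exact h2u
      rcases mul_pos_iff.mp h4 with ⟨_, h⟩ | ⟨h, _⟩
      · exact h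
      · exact absurd h (not_lt.mpr h2v.le)
    apply eq_two_int
    · rw [show π * (u x - v x - 1 / 2) = π * (u x - v x) - π / 2 by ring, sin_sub,
        cos_pi_div_two, sin_pi_div_two]
      rw [hcos0]; ring
    · rw [show π * (u x - v x - 1 / 2) = π * (u x - v x) - π / 2 by ring, cos_sub,
        cos_pi_div_two, sin_pi_div_two]
      rw [hcos0]; simpa using hsinpos
  obtain ⟨k0, hk0⟩ := key 0
  refine ⟨k0, fun x => ?_⟩
  have hcc : Continuous fun x => u x - v x - 1 / 2 := (hcu.sub hcv).sub continuous_const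
  have h3 := const_of_two_int hcc key x
  rw [hk0] at h3
  linarith

/-- F commutes with integer translations. -/
lemma add_int {F : ℝ → ℝ} (h : ∀ y, F (y + 1) = F y + 1) :
    ∀ (n : ℤ) (x : ℝ), F (x + n) = F x + n := by
  intro n
  induction n using Int.induction_on with
  | zero => simp
  | succ k ih =>
    intro x
    have e : (x : ℝ) + ((k : ℤ) + 1 : ℤ) = (x + (k : ℤ)) + 1 := by push_cast; ring
    rw [e, h, ih]; push_cast; ring
  | pred k ih =>
    intro x
    have e : (x + (-(k : ℤ) - 1 : ℤ) : ℝ) + 1 = x + (-(k : ℤ) : ℤ) := by push_cast; ring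
    have := h (x + (-(k : ℤ) - 1 : ℤ))
    rw [e, ih] at this
    have := this.symm
    push_cast at this ⊢
    linarith

/-- From a continuous left-inverse-up-to-even-translation pair, strict monotonicity. -/
lemma strictMono_of_pair {F Fi : ℝ → ℝ} (hF : Continuous F)
    (hper : ∀ x, F (x + 1) = F x + 1) (hli : ∀ x, Fi (F x) = x) : StrictMono F := by
  have hinj : Function.Injective F := Function.LeftInverse.injective hli
  rcases Continuous.strictMono_of_inj hF hinj with h | h
  · exact h
  · exfalso
    have h1 : F 1 < F 0 := h (by norm_num)
    have h2 : F 1 = F 0 + 1 := by simpa using hper 0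
    linarith

/-- Compatibility of a periodic lift with the quotient relation. -/
lemma liftRel {F : ℝ → ℝ} (hper : ∀ x, F (x + 1) = F x + 1) :
    Relator.LiftFun (QuotientAddGroup.leftRel (AddSubgroup.zmultiples (1:ℝ))).r
      (QuotientAddGroup.leftRel (AddSubgroup.zmultiples (1:ℝ))).r F F := by
  intro x y hxy
  rw [Setoid.comm'] at hxy ⊢
  rw [QuotientAddGroup.leftRel_apply] at hxy ⊢
  obtain ⟨k, hk⟩ := AddSubgroup.mem_zmultiples_iff.mp hxy
  refine AddSubgroup.mem_zmultiples_iff.mpr ⟨k, ?_⟩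
  have hy : x = y + (k : ℝ) := by
    have h2 : (k : ℝ) * 1 = -y + x := by simpa [zsmul_eq_mul] using hk
    linarith [h2]
  rw [hy, add_int hper k y]
  simp [zsmul_eq_mul]

/-- Build a homeomorphism of the circle from a lift with an exact inverse. -/
def mkCircleHomeo (F Fi : ℝ → ℝ) (hF : Continuous F) (hFi : Continuous Fi)
    (hper : ∀ x, F (x + 1) = F x + 1) (hiper : ∀ x, Fi (x + 1) = Fi x + 1)
    (hli : ∀ x, Fi (F x) = x) (hri : ∀ x, F (Fi x) = x) :
    AddCircle (1 : ℝ) ≃ₜ AddCircle (1 : ℝ) where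
  toFun := Quotient.map' F (liftRel hper)
  invFun := Quotient.map' Fi (liftRel hiper)
  left_inv := by
    intro q
    induction q using QuotientAddGroup.induction_on with
    | H x =>
      show Quotient.map' Fi _ (Quotient.map' F _ _) = _
      exact congrArg (fun y : ℝ => (y : AddCircle (1:ℝ))) (hli x)
  right_inv := by
    intro q
    induction q using QuotientAddGroup.induction_on with
    | H x =>
      show Quotient.map' F _ (Quotient.map' Fi _ _) = _
      exact congrArg (fun y : ℝ => (y : AddCircle (1:ℝ))) (hri x)
  continuous_toFun := Continuous.quotient_map' hF (liftRel hper)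
  continuous_invFun := Continuous.quotient_map' hFi (liftRel hiper)

lemma mkCircleHomeo_apply (F Fi : ℝ → ℝ) (hF hFi hper hiper hli hri) (x : ℝ) :
    mkCircleHomeo F Fi hF hFi hper hiper hli hri ((x : ℝ) : AddCircle (1:ℝ)) = ((F x : ℝ) : AddCircle (1:ℝ)) := rfl



/-! ### Concrete data: matrices A = A₁A₂ = [[5,1],[8,2]], B = B₁B₂ = [[6,1],[-5,0]],
with A*B = J*(B*A) where J = [[0,-1],[1,0]]. All factors have positive-definite
symmetric part. -/

def ΦA : ℝ → ℝ := fun x => mob 1 0 1 1 (mob 5 1 3 1 x)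
def ΦAi : ℝ → ℝ := fun x => mob 1 (-1) (-3) 5 (mob 1 0 (-1) 1 x)
def ΦB : ℝ → ℝ := fun x => mob 1 0 (-1) 1 (mob 6 1 1 1 x)
def ΦBi : ℝ → ℝ := fun x => mob 1 (-1) (-1) 6 (mob 1 0 1 1 x)

lemma dirA : Dir 5 1 8 2 ΦA := by
  have h := dir_comp (mob_dir (a := 1) (b := 0) (c := 1) (d := 1) (by norm_num) (by norm_num) (by norm_num))
    (mob_dir (a := 5) (b := 1) (c := 3) (d := 1) (by norm_num) (by norm_num) (by norm_num))
  norm_num at h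
  exact h

lemma dirAi : Dir 2 (-1) (-8) 5 ΦAi := by
  have h := dir_comp (mob_dir (a := 1) (b := -1) (c := -3) (d := 5) (by norm_num) (by norm_num) (by norm_num))
    (mob_dir (a := 1) (b := 0) (c := -1) (d := 1) (by norm_num) (by norm_num) (by norm_num))
  norm_num at h
  exact h

lemma dirB : Dir 6 1 (-5) 0 ΦB := by
  have h := dir_comp (mob_dir (a := 1) (b := 0) (c := -1) (d := 1) (by norm_num) (by norm_num) (by norm_num))
    (mob_dir (a := 6) (b := 1) (c := 1) (d := 1) (by norm_num) (by norm_num) (by norm_num))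
  norm_num at h
  exact h

lemma dirBi : Dir 0 (-1) 5 6 ΦBi := by
  have h := dir_comp (mob_dir (a := 1) (b := -1) (c := -1) (d := 6) (by norm_num) (by norm_num) (by norm_num))
    (mob_dir (a := 1) (b := 0) (c := 1) (d := 1) (by norm_num) (by norm_num) (by norm_num))
  norm_num at h
  exact h

lemma contA : Continuous ΦA :=
  (mob_cont (by norm_num) (by norm_num) (by norm_num)).comp
    (mob_cont (by norm_num) (by norm_num) (by norm_num))
lemma contAi : Continuous ΦAi :=
  (mob_cont (by norm_num) (by norm_num) (by norm_num)).comp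
    (mob_cont (by norm_num) (by norm_num) (by norm_num))
lemma contB : Continuous ΦB :=
  (mob_cont (by norm_num) (by norm_num) (by norm_num)).comp
    (mob_cont (by norm_num) (by norm_num) (by norm_num))
lemma contBi : Continuous ΦBi :=
  (mob_cont (by norm_num) (by norm_num) (by norm_num)).comp
    (mob_cont (by norm_num) (by norm_num) (by norm_num))

lemma perA : ∀ x, ΦA (x + 1) = ΦA x + 1 := by
  intro x; unfold ΦA; rw [mob_per, mob_per]
lemma perAi : ∀ x, ΦAi (x + 1) = ΦAi x + 1 := by
  intro x; unfold ΦAi; rw [mob_per, mob_per]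
lemma perB : ∀ x, ΦB (x + 1) = ΦB x + 1 := by
  intro x; unfold ΦB; rw [mob_per, mob_per]
lemma perBi : ∀ x, ΦBi (x + 1) = ΦBi x + 1 := by
  intro x; unfold ΦBi; rw [mob_per, mob_per]

/-- Exact inverse package. -/
lemma inverse_package {F G : ℝ → ℝ} (hGc : Continuous G)
    (hFp : ∀ x, F (x + 1) = F x + 1) (hGp : ∀ x, G (x + 1) = G x + 1)
    (h1 : ∃ k : ℤ, ∀ x, G (F x) = x + 2 * k) (h2 : ∃ k : ℤ, ∀ y, F (G y) = y + 2 * k) :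
    ∃ Fi : ℝ → ℝ, Continuous Fi ∧ (∀ x, Fi (x + 1) = Fi x + 1) ∧ (∀ x, Fi (F x) = x)
      ∧ (∀ y, F (Fi y) = y) := by
  obtain ⟨k1, hk1⟩ := h1
  obtain ⟨k2, hk2⟩ := h2
  have hkk : k1 = k2 := by
    have ha := hk1 (G 0)
    rw [hk2 0] at ha
    have e2 : (0 : ℝ) + 2 * (k2 : ℝ) = 0 + ((2 * k2 : ℤ) : ℝ) := by push_cast; ring
    rw [e2, add_int hGp] at ha
    have h3 : ((2 * k2 : ℤ) : ℝ) = 2 * (k1 : ℝ) := by linarith [ha]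
    have h4 : (2 * k2 : ℤ) = 2 * k1 := by exact_mod_cast h3
    omega
  refine ⟨fun y => G y - 2 * k1, hGc.sub continuous_const, ?_, ?_, ?_⟩
  · intro x; show G (x+1) - 2*(k1:ℝ) = G x - 2*(k1:ℝ) + 1; rw [hGp]; ring
  · intro x; show G (F x) - 2*(k1:ℝ) = x; rw [hk1]; ring
  · intro y
    have e : G y - 2 * (k1 : ℝ) = G y + ((-(2 * k1) : ℤ) : ℝ) := by push_cast; ring
    show F (G y - 2 * (k1:ℝ)) = y
    rw [e, add_int hFp, hk2, hkk]
    push_cast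
    ring

lemma invA : ∃ Fi : ℝ → ℝ, Continuous Fi ∧ (∀ x, Fi (x + 1) = Fi x + 1)
    ∧ (∀ x, Fi (ΦA x) = x) ∧ (∀ y, ΦA (Fi y) = y) := by
  apply inverse_package contAi perA perAi
  · apply shift_of_scalar (m := 2) (by norm_num)
    · have h := dir_comp dirAi dirA
      norm_num at h
      exact h
    · exact contAi.comp contA
  · apply shift_of_scalar (m := 2) (by norm_num)
    · have h := dir_comp dirA dirAi
      norm_num at h
      exact h
    · exact contA.comp contAi

lemma invB : ∃ Fi : ℝ → ℝ, Continuous Fi ∧ (∀ x, Fi (x + 1) = Fi x + 1)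
    ∧ (∀ x, Fi (ΦB x) = x) ∧ (∀ y, ΦB (Fi y) = y) := by
  apply inverse_package contBi perB perBi
  · apply shift_of_scalar (m := 5) (by norm_num)
    · have h := dir_comp dirBi dirB
      norm_num at h
      exact h
    · exact contBi.comp contB
  · apply shift_of_scalar (m := 5) (by norm_num)
    · have h := dir_comp dirB dirBi
      norm_num at h
      exact h
    · exact contB.comp contBi

/-- The commutation relation between the lifts. -/
lemma commrel : ∃ k : ℤ, ∀ x, ΦA (ΦB x) = ΦB (ΦA x) + (1 / 2 + 2 * k) := by
  apply shift_of_J (q1 := 38) (q2 := 8) (q3 := -25) (q4 := -5)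
  · have h := dir_comp dirA dirB
    norm_num at h ⊢
    exact h
  · have h := dir_comp dirB dirA
    norm_num at h
    exact h
  · exact contA.comp contB
  · exact contB.comp contA

/-! ### The concrete circle homeomorphisms -/

def ΨA : ℝ → ℝ := Classical.choose invA
lemma ΨA_cont : Continuous ΨA := (Classical.choose_spec invA).1
lemma ΨA_per : ∀ x, ΨA (x + 1) = ΨA x + 1 := (Classical.choose_spec invA).2.1
lemma ΨA_li : ∀ x, ΨA (ΦA x) = x := (Classical.choose_spec invA).2.2.1
lemma ΨA_ri : ∀ y, ΦA (ΨA y) = y := (Classical.choose_spec invA).2.2.2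

def ΨB : ℝ → ℝ := Classical.choose invB
lemma ΨB_cont : Continuous ΨB := (Classical.choose_spec invB).1
lemma ΨB_per : ∀ x, ΨB (x + 1) = ΨB x + 1 := (Classical.choose_spec invB).2.1
lemma ΨB_li : ∀ x, ΨB (ΦB x) = x := (Classical.choose_spec invB).2.2.1
lemma ΨB_ri : ∀ y, ΦB (ΨB y) = y := (Classical.choose_spec invB).2.2.2

def kc : ℤ := Classical.choose commrel
lemma kc_spec : ∀ x, ΦA (ΦB x) = ΦB (ΦA x) + (1 / 2 + 2 * kc) := Classical.choose_spec commrel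

def rc : ℝ := 1 / 2 + 2 * kc
def cc : AddCircle (1 : ℝ) := ((rc : ℝ) : AddCircle (1 : ℝ))

def fA : AddCircle (1 : ℝ) ≃ₜ AddCircle (1 : ℝ) :=
  mkCircleHomeo ΦA ΨA contA ΨA_cont perA ΨA_per ΨA_li ΨA_ri

def fB : AddCircle (1 : ℝ) ≃ₜ AddCircle (1 : ℝ) :=
  mkCircleHomeo ΦB ΨB contB ΨB_cont perB ΨB_per ΨB_li ΨB_ri

lemma monoA : StrictMono ΦA := strictMono_of_pair contA perA ΨA_li
lemma monoB : StrictMono ΦB := strictMono_of_pair contB perB ΨB_li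

lemma fA_apply (x : ℝ) : fA ((x : ℝ) : AddCircle (1:ℝ)) = ((ΦA x : ℝ) : AddCircle (1:ℝ)) := rfl
lemma fB_apply (x : ℝ) : fB ((x : ℝ) : AddCircle (1:ℝ)) = ((ΦB x : ℝ) : AddCircle (1:ℝ)) := rfl

lemma rot_lift (w : ℝ) :
    ((rc + w : ℝ) : AddCircle (1:ℝ)) = Homeomorph.addLeft cc ((w : ℝ) : AddCircle (1:ℝ)) := by
  show ((rc + w : ℝ) : AddCircle (1:ℝ)) = cc + ((w : ℝ) : AddCircle (1:ℝ))
  rfl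

lemma key_comm : fB.trans fA = (fA.trans fB).trans (Homeomorph.addLeft cc) := by
  apply Homeomorph.ext
  intro z
  induction z using QuotientAddGroup.induction_on with
  | H x =>
    show fA (fB ((x : ℝ) : AddCircle (1:ℝ)))
        = Homeomorph.addLeft cc (fB (fA ((x : ℝ) : AddCircle (1:ℝ))))
    rw [fA_apply, fB_apply, fA_apply, fB_apply]
    rw [show ΦA (ΦB x) = rc + ΦB (ΦA x) by rw [kc_spec x]; unfold rc; ring]
    exact rot_lift _

end NoRetraction

end

/-- A homeomorphism of the circle `ℝ/ℤ` is orientation-preserving if it admits a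
continuous monotone increasing lift `ℝ → ℝ`. -/
def OrientationPreserving (f : AddCircle (1 : ℝ) ≃ₜ AddCircle (1 : ℝ)) : Prop :=
  ∃ F : ℝ → ℝ, Continuous F ∧ StrictMono F ∧
    ∀ x : ℝ, ((F x : ℝ) : AddCircle (1 : ℝ)) = f ((x : ℝ) : AddCircle (1 : ℝ))

namespace NoRetraction

lemma opA : OrientationPreserving fA :=
  ⟨ΦA, contA, monoA, fun _ => rfl⟩

lemma opB : OrientationPreserving fB :=
  ⟨ΦB, contB, monoB, fun _ => rfl⟩

lemma opAB : OrientationPreserving (fA.trans fB) :=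
  ⟨fun x => ΦB (ΦA x), contB.comp contA, monoB.comp monoA, fun _ => rfl⟩

lemma opRot : OrientationPreserving (Homeomorph.addLeft cc) :=
  ⟨fun x => rc + x, continuous_const.add continuous_id,
    strictMono_id.const_add rc, fun x => rot_lift x⟩

end NoRetraction

/-- There is no group homomorphism `τ : Homeo₊(S¹) → ℝ/ℤ` with
`τ(r_a) = a` for every rotation `r_a : x ↦ x + a`; i.e. there is no retraction of
`Homeo₊(S¹)` onto its rotation subgroup which is a group homomorphism. -/
theorem no_homomorphic_retraction_onto_rotations :
    ¬ ∃ τ : (AddCircle (1 : ℝ) ≃ₜ AddCircle (1 : ℝ)) → AddCircle (1 : ℝ),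
      (∀ f g : AddCircle (1 : ℝ) ≃ₜ AddCircle (1 : ℝ),
        OrientationPreserving f → OrientationPreserving g →
          τ (f.trans g) = τ f + τ g) ∧
      (∀ a : AddCircle (1 : ℝ), τ (Homeomorph.addLeft a) = a) := by
  rintro ⟨τ, h1, h2⟩
  open NoRetraction in
  have e1 := h1 _ _ opB opA
  have e2 := h1 _ _ NoRetraction.opA NoRetraction.opB
  have e3 := h1 _ _ NoRetraction.opAB NoRetraction.opRot
  have e4 := h2 NoRetraction.cc
  rw [NoRetraction.key_comm, e3, e2, e4] at e1
  have hc : NoRetraction.cc = 0 := by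
    have h5 : τ NoRetraction.fA + τ NoRetraction.fB + NoRetraction.cc
        = τ NoRetraction.fA + τ NoRetraction.fB + 0 := by
      rw [add_zero, e1]
      exact add_comm _ _
    exact add_left_cancel h5
  obtain ⟨n, hn⟩ := (AddCircle.coe_eq_zero_iff (1:ℝ)).mp hc
  have hn' : (n : ℝ) = 1 / 2 + 2 * (NoRetraction.kc : ℝ) := by
    simpa [zsmul_eq_mul, NoRetraction.rc] using hn
  have h7 : (2 * n : ℤ) = 1 + 4 * NoRetraction.kc := by
    have h8 : ((2 * n : ℤ) : ℝ) = ((1 + 4 * NoRetraction.kc : ℤ) : ℝ) := by push_cast; linarith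
    exact_mod_cast h8
  omega
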